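/- arXiv:1010.0294 — 3 statements merged into one kernel-verified Lean document; each statement's English description precedes it below -/
import Mathlib

section
/- The rational functions x1(y1,y2) = -(y1^3 - 2y1^2 - y1^2 y2 + 3y1 + 2y1 y2 + y2^2 y1 + y2^2)/D, x2(y1,y2) = (2y1^2 + y1^2 y2 - y2^2 y1 - 2y1 y2 - 3y1 + 3 + 3y2 + y2^3 + 2y2^2)/D, x3(y1,y2) = -(y1^2 y2 - y1^2 - 2y1 y2 - y2^2 y1 + y2^3 + 2y2^2 + 3y2)/D, where D = y1^3 - 2y1^2 - y1^2 y2 + 3y1 + 2y1 y2 + y2^2 y1 - 3 - 3y2 - 2y2^2, satisfy the identity 1 + x1^3 + x2^3 + x3^3 = 0 as rational functions in y1, y2 over the rationals. -/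
set_option maxHeartbeats 2000000


/-- The cubic parametrization of the Fermat cubic satisfies
`1 + x1^3 + x2^3 + x3^3 = 0` in the field of rational functions `ℚ(y1, y2)`. -/
theorem fermat_param_identity :
    let K := FractionRing (MvPolynomial (Fin 2) ℚ)
    let y1 : K := algebraMap (MvPolynomial (Fin 2) ℚ) K (MvPolynomial.X 0)
    let y2 : K := algebraMap (MvPolynomial (Fin 2) ℚ) K (MvPolynomial.X 1)
    let D : K := y1^3 - 2*y1^2 - y1^2*y2 + 3*y1 + 2*y1*y2 + y2^2*y1 - 3 - 3*y2 - 2*y2^2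
    let x1 : K := -(y1^3 - 2*y1^2 - y1^2*y2 + 3*y1 + 2*y1*y2 + y2^2*y1 + y2^2) / D
    let x2 : K := (2*y1^2 + y1^2*y2 - y2^2*y1 - 2*y1*y2 - 3*y1 + 3 + 3*y2 + y2^3 + 2*y2^2) / D
    let x3 : K := -(y1^2*y2 - y1^2 - 2*y1*y2 - y2^2*y1 + y2^3 + 2*y2^2 + 3*y2) / D
    1 + x1^3 + x2^3 + x3^3 = 0 := by
  intro K y1 y2 D x1 x2 x3
  have hD : D ≠ 0 := by
    set p : MvPolynomial (Fin 2) ℚ :=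
      (MvPolynomial.X 0)^3 - 2*(MvPolynomial.X 0)^2 - (MvPolynomial.X 0)^2*(MvPolynomial.X 1)
        + 3*(MvPolynomial.X 0) + 2*(MvPolynomial.X 0)*(MvPolynomial.X 1)
        + (MvPolynomial.X 1)^2*(MvPolynomial.X 0) - 3 - 3*(MvPolynomial.X 1)
        - 2*(MvPolynomial.X 1)^2 with hp
    have hDp : D = algebraMap (MvPolynomial (Fin 2) ℚ) K p := by
      simp only [hp, map_sub, map_add, map_mul, map_pow, map_ofNat, map_one, D, y1, y2]
    rw [hDp]
    intro h
    have hp0 : p = 0 :=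
      (map_eq_zero_iff _ (IsFractionRing.injective (MvPolynomial (Fin 2) ℚ) K)).mp h
    have := congrArg (MvPolynomial.eval (fun i : Fin 2 => if i = 0 then (3:ℚ) else 0)) hp0
    simp [hp] at this
    norm_num at this
  simp only [x1, x2, x3]
  field_simp
  ring
end

section
/- For every point (y1, y2) ∈ ℝ² with D(y1,y2) := y1^3 - 2y1^2 - y1^2 y2 + 3y1 + 2y1 y2 + y2^2 y1 - 3 - 3y2 - 2y2^2 ≠ 0, the point (x1(y1,y2), x2(y1,y2), x3(y1,y2)) given by the cubic parametrization lies on the real affine Fermat cubic surface {(x1,x2,x3) ∈ ℝ³ : 1 + x1^3 + x2^3 + x3^3 = 0}. -/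
/-- For every `(y1, y2) ∈ ℝ²` with nonzero denominator `D`, the cubic
parametrization yields a point on the real affine Fermat cubic surface. -/
theorem fermat_param_real (y1 y2 : ℝ)
    (hD : y1^3 - 2*y1^2 - y1^2*y2 + 3*y1 + 2*y1*y2 + y2^2*y1 - 3 - 3*y2 - 2*y2^2 ≠ 0) :
    let D : ℝ := y1^3 - 2*y1^2 - y1^2*y2 + 3*y1 + 2*y1*y2 + y2^2*y1 - 3 - 3*y2 - 2*y2^2
    let x1 : ℝ := -(y1^3 - 2*y1^2 - y1^2*y2 + 3*y1 + 2*y1*y2 + y2^2*y1 + y2^2) / D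
    let x2 : ℝ := (2*y1^2 + y1^2*y2 - y2^2*y1 - 2*y1*y2 - 3*y1 + 3 + 3*y2 + y2^3 + 2*y2^2) / D
    let x3 : ℝ := -(y1^2*y2 - y1^2 - 2*y1*y2 - y2^2*y1 + y2^3 + 2*y2^2 + 3*y2) / D
    1 + x1^3 + x2^3 + x3^3 = 0 := by
  intro D x1 x2 x3
  have h : D ≠ 0 := hD
  simp only [x1, x2, x3]
  field_simp
  simp only [D]
  ring
end

section
/- The numerators N1, N2, N3 and the denominator D of the cubic parametrization of the Fermat cubic have no common non-constant polynomial factor in ℚ[y1, y2]; i.e., gcd(N1, N2, N3, D) = 1. -/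
open MvPolynomial

/-- The numerators and denominator of the cubic parametrization of the Fermat
cubic have no common non-constant factor in `ℚ[y1, y2]`. -/
theorem fermat_param_no_common_factor :
    let y1 : MvPolynomial (Fin 2) ℚ := X 0
    let y2 : MvPolynomial (Fin 2) ℚ := X 1
    let N1 := -(y1^3 - 2*y1^2 - y1^2*y2 + 3*y1 + 2*y1*y2 + y2^2*y1 + y2^2)
    let N2 := 2*y1^2 + y1^2*y2 - y2^2*y1 - 2*y1*y2 - 3*y1 + 3 + 3*y2 + y2^3 + 2*y2^2
    let N3 := -(y1^2*y2 - y1^2 - 2*y1*y2 - y2^2*y1 + y2^3 + 2*y2^2 + 3*y2)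
    let D := y1^3 - 2*y1^2 - y1^2*y2 + 3*y1 + 2*y1*y2 + y2^2*y1 - 3 - 3*y2 - 2*y2^2
    ∀ p : MvPolynomial (Fin 2) ℚ, p ∣ N1 → p ∣ N2 → p ∣ N3 → p ∣ D → IsUnit p := by
  intro y1 y2 N1 N2 N3 D p h1 h2 h3 h4
  -- p divides -3(y2^2+y2+1)
  have hf : p ∣ -(3 * (y2^2 + y2 + 1)) := by
    have h : p ∣ N1 + D := dvd_add h1 h4
    have e : N1 + D = -(3 * (y2^2 + y2 + 1)) := by simp only [N1, D, y1, y2]; ring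
    rwa [e] at h
  have hg : p ∣ 3 * (y1^3 + 1) := by
    have h : p ∣ 3 * (N2 + D) + (y2 - 1) * (N1 + D) :=
      dvd_add (Dvd.dvd.mul_left (dvd_add h2 h4) 3) (Dvd.dvd.mul_left (dvd_add h1 h4) (y2 - 1))
    have e : 3 * (N2 + D) + (y2 - 1) * (N1 + D) = 3 * (y1^3 + 1) := by
      simp only [N1, N2, D, y1, y2]; ring
    rwa [e] at h
  -- transfer to ℚ[y2][y1]
  set e := MvPolynomial.finSuccEquiv ℚ 1 with he
  have hx0 : e y1 = Polynomial.X := MvPolynomial.finSuccEquiv_X_zero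
  have hx1 : e y2 = Polynomial.C (X 0) := by
    have : (1 : Fin 2) = Fin.succ 0 := rfl
    rw [show y2 = X (Fin.succ 0) from rfl]
    exact MvPolynomial.finSuccEquiv_X_succ
  have hef : e p ∣ Polynomial.C (-(3 * ((X 0 : MvPolynomial (Fin 1) ℚ)^2 + X 0 + 1))) := by
    have h := map_dvd e hf
    have : e (-(3 * (y2^2 + y2 + 1)))
        = Polynomial.C (-(3 * ((X 0 : MvPolynomial (Fin 1) ℚ)^2 + X 0 + 1))) := by
      simp [map_mul, map_add, map_pow, map_neg, hx1, map_ofNat]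
    rwa [this] at h
  have heg : e p ∣ 3 * (Polynomial.X ^ 3 + 1) := by
    have h := map_dvd e hg
    have : e (3 * (y1^3 + 1)) = 3 * (Polynomial.X ^ 3 + 1) := by
      simp [map_mul, map_add, map_pow, hx0, map_ofNat]
    rwa [this] at h
  have hc : (-(3 * ((X 0 : MvPolynomial (Fin 1) ℚ)^2 + X 0 + 1))) ≠ 0 := by
    intro h
    have := congrArg (MvPolynomial.eval (fun _ => (0:ℚ))) h
    simp [map_ofNat] at this
  have hdeg : (e p).natDegree = 0 := by
    have h := Polynomial.natDegree_le_of_dvd hef (Polynomial.C_ne_zero.mpr hc)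
    rw [Polynomial.natDegree_C] at h
    exact Nat.le_zero.mp h
  obtain ⟨a, ha⟩ := Polynomial.natDegree_eq_zero.mp hdeg
  obtain ⟨q, hq⟩ := heg
  have hcoeff : a * q.coeff 3 = 3 := by
    have := congrArg (fun r => Polynomial.coeff r 3) hq
    simp [← ha, Polynomial.coeff_C_mul, Polynomial.coeff_one] at this
    linear_combination -this
  have hu3 : IsUnit (3 : MvPolynomial (Fin 1) ℚ) := by
    refine IsUnit.of_mul_eq_one (a := 3) (C (3⁻¹ : ℚ)) ?_
    rw [show (3 : MvPolynomial (Fin 1) ℚ) = C (3:ℚ) from (map_ofNat _ 3).symm, ← map_mul]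
    norm_num
  have hua : IsUnit a := isUnit_of_dvd_unit ⟨q.coeff 3, hcoeff.symm⟩ hu3
  have huep : IsUnit (e p) := by rw [← ha]; exact hua.map Polynomial.C
  have : p = e.symm (e p) := (AlgEquiv.symm_apply_apply e p).symm
  rw [this]
  exact huep.map e.symm
end
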